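/- Define R_0 W_0 := W_0 and, for i ≥ 0 and ξ ∈ M^{3×2}, R_{i+1}W_0(ξ) := inf{ (1-t) R_i W_0(ξ - t a⊗b) + t R_i W_0(ξ + (1-t) a⊗b) : a ∈ ℝ², b ∈ ℝ³, t ∈ [0,1] }. Then for every i ≥ 0 and every ξ ∈ M^{3×2} with rank(ξ) = 2, the infimum defining R_{i+1}W_0(ξ) is attained: there exist a ∈ ℝ², b ∈ ℝ³ and t ∈ [0,1] such that R_{i+1}W_0(ξ) = (1-t) R_i W_0(ξ - t a⊗b) + t R_i W_0(ξ + (1-t) a⊗b). -/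

import Mathlib

open scoped ENNReal
open MeasureTheory Filter

noncomputable section

attribute [local instance] Matrix.normedAddCommGroup

/-- `juxt ξ ζ` is the 3×3 matrix whose first two columns are the columns of the 3×2 matrix `ξ`
and whose third column is `ζ`, i.e. the matrix denoted `(ξ|ζ)` in the paper. -/
def juxt (ξ : Matrix (Fin 3) (Fin 2) ℝ) (ζ : Fin 3 → ℝ) : Matrix (Fin 3) (Fin 3) ℝ :=
  Matrix.of fun i k => Fin.lastCases (ζ i) (fun j => ξ i j) k

/-- `W0 W ξ = inf_{ζ ∈ ℝ³} W (ξ|ζ)`. -/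
def W0 (W : Matrix (Fin 3) (Fin 3) ℝ → ℝ≥0∞) (ξ : Matrix (Fin 3) (Fin 2) ℝ) : ℝ≥0∞ :=
  ⨅ ζ : Fin 3 → ℝ, W (juxt ξ ζ)

/-- The Kohn–Strang sequence: `R₀W₀ := W₀` and
`R_{i+1}W₀(ξ) := inf { (1-t) RᵢW₀(ξ - t a⊗b) + t RᵢW₀(ξ + (1-t) a⊗b) :
a ∈ ℝ², b ∈ ℝ³, t ∈ [0,1] }`, where `a⊗b` is the rank-one 3×2 matrix `b aᵀ`. -/
def Rseq (f : Matrix (Fin 3) (Fin 2) ℝ → ℝ≥0∞) : ℕ → Matrix (Fin 3) (Fin 2) ℝ → ℝ≥0∞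
  | 0 => f
  | (i + 1) => fun ξ =>
      ⨅ (a : Fin 2 → ℝ) (b : Fin 3 → ℝ) (t : ℝ) (_ : t ∈ Set.Icc (0 : ℝ) 1),
        ENNReal.ofReal (1 - t) * Rseq f i (ξ - t • Matrix.vecMulVec b a) +
          ENNReal.ofReal t * Rseq f i (ξ + (1 - t) • Matrix.vecMulVec b a)


open Set Topology

attribute [local instance] Matrix.normedSpace

local notation "M32" => Matrix (Fin 3) (Fin 2) ℝ





lemma norm_fst_le_juxt (ξ : M32) (ζ : Fin 3 → ℝ) : ‖ξ‖ ≤ ‖juxt ξ ζ‖ := by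
  rw [Matrix.norm_le_iff (norm_nonneg _)]
  intro i j
  have h : ξ i j = juxt ξ ζ i (Fin.castSucc j) := by simp [juxt]
  rw [h]
  exact Matrix.norm_entry_le_entrywise_sup_norm _

lemma norm_snd_le_juxt (ξ : M32) (ζ : Fin 3 → ℝ) : ‖ζ‖ ≤ ‖juxt ξ ζ‖ := by
  rw [pi_norm_le_iff_of_nonneg (norm_nonneg _)]
  intro i
  have h : ζ i = juxt ξ ζ i (Fin.last 2) := by simp only [juxt, Matrix.of_apply, Fin.lastCases_last]
  rw [h]
  exact Matrix.norm_entry_le_entrywise_sup_norm _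

lemma continuous_juxt : Continuous fun q : M32 × (Fin 3 → ℝ) => juxt q.1 q.2 := by
  apply continuous_pi; intro i
  apply continuous_pi; intro k
  induction k using Fin.lastCases with
  | last =>
      simp only [juxt, Matrix.of_apply, Fin.lastCases_last]
      exact (continuous_apply i).comp continuous_snd
  | cast j =>
      simp only [juxt, Matrix.of_apply, Fin.lastCases_castSucc]
      exact Continuous.comp (continuous_apply j) (Continuous.comp (continuous_apply i) continuous_fst)

lemma continuous_vecMulVec :
    Continuous fun q : (Fin 3 → ℝ) × (Fin 2 → ℝ) => Matrix.vecMulVec q.1 q.2 := by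
  apply continuous_pi; intro i
  apply continuous_pi; intro j
  simp only [Matrix.vecMulVec_apply]
  exact ((continuous_apply i).comp continuous_fst).mul ((continuous_apply j).comp continuous_snd)

lemma exists_norm_apply_eq {n : ℕ} (hn : 0 < n) (x : Fin n → ℝ) : ∃ i, ‖x‖ = ‖x i‖ := by
  obtain ⟨i, -, hi⟩ := Finset.exists_mem_eq_sup (Finset.univ : Finset (Fin n))
    (Finset.univ_nonempty_iff.2 ⟨⟨0, hn⟩⟩) (fun b => ‖x b‖₊)
  exact ⟨i, by rw [Pi.norm_def, hi]; rfl⟩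

lemma norm_vecMulVec (b : Fin 3 → ℝ) (a : Fin 2 → ℝ) :
    ‖Matrix.vecMulVec b a‖ = ‖b‖ * ‖a‖ := by
  apply le_antisymm
  · rw [Matrix.norm_le_iff (by positivity)]
    intro i j
    rw [Matrix.vecMulVec_apply]
    calc ‖b i * a j‖ = ‖b i‖ * ‖a j‖ := norm_mul _ _
    _ ≤ ‖b‖ * ‖a‖ := by
        gcongr <;> [exact norm_le_pi_norm b i; exact norm_le_pi_norm a j]
  · obtain ⟨i, hi⟩ := exists_norm_apply_eq (by norm_num) b
    obtain ⟨j, hj⟩ := exists_norm_apply_eq (by norm_num) a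
    rw [hi, hj, ← norm_mul, ← Matrix.vecMulVec_apply (w := b) (v := a)]
    exact Matrix.norm_entry_le_entrywise_sup_norm _


-- rpow inversion
lemma le_rpow_inv_of_rpow_le {p s A : ℝ} (hp : 0 < p) (hs : 0 ≤ s) (h : s ^ p ≤ A) :
    s ≤ A ^ (1 / p) := by
  have hA : 0 ≤ A := le_trans (Real.rpow_nonneg hs p) h
  calc s = (s ^ p) ^ (1 / p) := by
        rw [one_div, Real.rpow_rpow_inv hs hp.ne']
  _ ≤ A ^ (1 / p) := Real.rpow_le_rpow (Real.rpow_nonneg hs p) h (by positivity)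

-- convexity inequality
lemma norm_combo_rpow {E : Type*} [NormedAddCommGroup E] [NormedSpace ℝ E]
    {p : ℝ} (hp : 1 ≤ p) {t : ℝ} (ht : t ∈ Icc (0:ℝ) 1) (X Y : E) :
    ‖(1 - t) • X + t • Y‖ ^ p ≤ (1 - t) * ‖X‖ ^ p + t * ‖Y‖ ^ p := by
  have h0 : (0:ℝ) ≤ 1 - t := by linarith [ht.2]
  have h1 : ‖(1 - t) • X + t • Y‖ ≤ (1 - t) * ‖X‖ + t * ‖Y‖ := by
    calc ‖(1 - t) • X + t • Y‖ ≤ ‖(1 - t) • X‖ + ‖t • Y‖ := norm_add_le _ _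
    _ = (1 - t) * ‖X‖ + t * ‖Y‖ := by
        rw [norm_smul, norm_smul, Real.norm_of_nonneg h0, Real.norm_of_nonneg ht.1]
  calc ‖(1 - t) • X + t • Y‖ ^ p ≤ ((1 - t) * ‖X‖ + t * ‖Y‖) ^ p :=
        Real.rpow_le_rpow (norm_nonneg _) h1 (by linarith)
  _ ≤ (1 - t) * ‖X‖ ^ p + t * ‖Y‖ ^ p := by
      have := (convexOn_rpow hp).2 (mem_Ici.2 (norm_nonneg X)) (mem_Ici.2 (norm_nonneg Y))
        h0 ht.1 (by ring)
      simpa [smul_eq_mul] using this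


def Gval (g : M32 → ℝ≥0∞) (ξ η : M32) (t : ℝ) : ℝ≥0∞ :=
  ENNReal.ofReal (1 - t) * g (ξ - t • η) + ENNReal.ofReal t * g (ξ + (1 - t) • η)

lemma Gval_coercive {p C : ℝ} (hp : 1 ≤ p) (hC : 0 < C) {g : M32 → ℝ≥0∞}
    (hgc : ∀ η, ENNReal.ofReal (C * ‖η‖ ^ p) ≤ g η) (ξ η : M32) {t : ℝ}
    (ht : t ∈ Icc (0:ℝ) 1) : ENNReal.ofReal (C * ‖ξ‖ ^ p) ≤ Gval g ξ η t := by
  have h0 : (0:ℝ) ≤ 1 - t := by linarith [ht.2]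
  have hkey : ξ = (1 - t) • (ξ - t • η) + t • (ξ + (1 - t) • η) := by module
  have h1 : C * ‖ξ‖ ^ p ≤ (1 - t) * (C * ‖ξ - t • η‖ ^ p) + t * (C * ‖ξ + (1 - t) • η‖ ^ p) := by
    have := norm_combo_rpow hp ht (ξ - t • η) (ξ + (1 - t) • η)
    rw [← hkey] at this
    nlinarith [this, Real.rpow_nonneg (norm_nonneg (ξ - t • η)) p,
      Real.rpow_nonneg (norm_nonneg (ξ + (1 - t) • η)) p]
  calc ENNReal.ofReal (C * ‖ξ‖ ^ p)
      ≤ ENNReal.ofReal ((1 - t) * (C * ‖ξ - t • η‖ ^ p) + t * (C * ‖ξ + (1 - t) • η‖ ^ p)) :=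
        ENNReal.ofReal_le_ofReal h1
  _ ≤ ENNReal.ofReal ((1 - t) * (C * ‖ξ - t • η‖ ^ p)) +
        ENNReal.ofReal (t * (C * ‖ξ + (1 - t) • η‖ ^ p)) := ENNReal.ofReal_add_le
  _ = ENNReal.ofReal (1 - t) * ENNReal.ofReal (C * ‖ξ - t • η‖ ^ p) +
        ENNReal.ofReal t * ENNReal.ofReal (C * ‖ξ + (1 - t) • η‖ ^ p) := by
        rw [ENNReal.ofReal_mul h0, ENNReal.ofReal_mul ht.1]
  _ ≤ Gval g ξ η t := add_le_add (mul_le_mul_right (hgc _) _) (mul_le_mul_right (hgc _) _)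

-- sublemma1
lemma lsc_le_lim_of_mul {g : M32 → ℝ≥0∞} (hg : LowerSemicontinuous g) {Zs : ℕ → M32} {ξ : M32}
    (hZ : Tendsto Zs atTop (𝓝 ξ)) {cs : ℕ → ℝ} (hcs : Tendsto cs atTop (𝓝 1))
    {vs : ℕ → ℝ≥0∞} {L : ℝ≥0∞} (hvL : Tendsto vs atTop (𝓝 L))
    (hle : ∀ᶠ k in atTop, ENNReal.ofReal (cs k) * g (Zs k) ≤ vs k) : g ξ ≤ L := by
  by_contra h'
  obtain ⟨y, hy1, hy2⟩ := exists_between (not_le.1 h')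
  have hyt : y ≠ ⊤ := hy2.ne_top
  have h1 : ∀ᶠ k in atTop, y < g (Zs k) := hZ.eventually (hg ξ y hy2)
  have h2 : ∀ᶠ k in atTop, ENNReal.ofReal (cs k) * y ≤ vs k := by
    filter_upwards [h1, hle] with k hk1 hk2
    exact le_trans (mul_le_mul_right hk1.le _) hk2
  have h3 : Tendsto (fun k => ENNReal.ofReal (cs k) * y) atTop (𝓝 y) := by
    have := ENNReal.Tendsto.mul_const (b := y) (ENNReal.tendsto_ofReal hcs) (Or.inl (by simp))
    simpa using this
  exact absurd (le_of_tendsto_of_tendsto h3 hvL h2) (not_le.2 hy1)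

lemma lsc_le_of_tendsto {g : M32 → ℝ≥0∞} (hg : LowerSemicontinuous g) {Zs : ℕ → M32} {ξ : M32}
    (hZ : Tendsto Zs atTop (𝓝 ξ)) {L : ℝ≥0∞} (hvL : Tendsto (fun k => g (Zs k)) atTop (𝓝 L)) :
    g ξ ≤ L :=
  lsc_le_lim_of_mul hg hZ tendsto_const_nhds hvL (Eventually.of_forall fun k => by simp)

-- sequence extraction from frequently
lemma exists_seq_of_frequently_nhds {X : Type*} [MetricSpace X] {x : X} {P : X → Prop}
    (h : ∃ᶠ z in 𝓝 x, P z) :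
    ∃ xs : ℕ → X, Tendsto xs atTop (𝓝 x) ∧ ∀ n, P (xs n) := by
  have H : ∀ n : ℕ, ∃ z, z ∈ Metric.ball x (1 / (n + 1)) ∧ P z := by
    intro n
    exact frequently_iff.1 h (Metric.ball_mem_nhds x (by positivity))
  choose xs h1 h2 using H
  refine ⟨xs, ?_, h2⟩
  rw [tendsto_iff_dist_tendsto_zero]
  apply squeeze_zero (fun n => dist_nonneg)
    (fun n => le_of_lt (by simpa [Metric.mem_ball] using h1 n))
  simpa [one_div] using tendsto_one_div_add_atTop_nhds_zero_nat (𝕜 := ℝ)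
lemma tendsto_smul_eta_zero {p C M : ℝ} (hp : 1 < p) (hC : 0 < C)
    {ξs ηs : ℕ → M32} {ts : ℕ → ℝ} (hts : ∀ k, ts k ∈ Icc (0:ℝ) 1)
    (hts0 : Tendsto ts atTop (𝓝 0))
    (h2 : ∀ᶠ k in atTop, ts k * (C * ‖ξs k + (1 - ts k) • ηs k‖ ^ p) ≤ M)
    (h3 : ∀ᶠ k in atTop, (1 - ts k) * (C * ‖ξs k - ts k • ηs k‖ ^ p) ≤ M) :
    Tendsto (fun k => ts k • ηs k) atTop (𝓝 0) := by
  have hp0 : (0:ℝ) < p := by linarith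
  have hq : (0:ℝ) < 1 - 1/p := by
    have : 1/p < 1 := by rw [div_lt_one hp0]; exact hp
    linarith
  have hM : 0 ≤ M := by
    rcases h3.exists with ⟨k, hk⟩
    have h1k : (0:ℝ) ≤ 1 - ts k := by linarith [(hts k).2]
    have h2k : 0 ≤ (1 - ts k) * (C * ‖ξs k - ts k • ηs k‖ ^ p) :=
      mul_nonneg h1k (by positivity)
    linarith
  set K1 : ℝ := (M / C) ^ (1/p) with hK1
  set K2 : ℝ := (2 * M / C) ^ (1/p) with hK2
  refine tendsto_zero_iff_norm_tendsto_zero.2 ?_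
  have hhalf : ∀ᶠ k in atTop, ts k ≤ 1/2 := hts0.eventually (eventually_le_nhds (by norm_num))
  have hbound : ∀ᶠ k in atTop, ‖ts k • ηs k‖ ≤ K1 * ts k ^ (1 - 1/p) + K2 * ts k := by
    filter_upwards [h2, h3, hhalf] with k hk2 hk3 hkh
    set s := ts k with hs
    have hs0 : 0 ≤ s := (hts k).1
    set X := ξs k - s • ηs k with hX
    set Y := ξs k + (1 - s) • ηs k with hY
    have hid : s • ηs k = s • Y - s • X := by
      rw [hX, hY, ← smul_sub]
      congr 1
      module
    have hnorm : ‖s • ηs k‖ ≤ s * ‖Y‖ + s * ‖X‖ := by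
      rw [hid]
      calc ‖s • Y - s • X‖ ≤ ‖s • Y‖ + ‖s • X‖ := norm_sub_le _ _
      _ = s * ‖Y‖ + s * ‖X‖ := by
          rw [norm_smul, norm_smul, Real.norm_of_nonneg hs0]
    have hYb : s * ‖Y‖ ≤ K1 * s ^ (1 - 1/p) := by
      have h1 : s * ‖Y‖ ^ p ≤ M / C := by
        rw [le_div_iff₀ hC]; nlinarith
      have h2' : (s ^ (1/p) * ‖Y‖) ^ p = s * ‖Y‖ ^ p := by
        rw [Real.mul_rpow (Real.rpow_nonneg hs0 _) (norm_nonneg _), one_div,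
          Real.rpow_inv_rpow hs0 hp0.ne']
      have h3' : s ^ (1/p) * ‖Y‖ ≤ K1 := by
        apply le_rpow_inv_of_rpow_le hp0 (by positivity)
        rw [h2']; exact h1
      have h4' : s = s ^ (1 - 1/p) * s ^ (1/p) := by
        rw [← Real.rpow_add' hs0 (by norm_num), sub_add_cancel, Real.rpow_one]
      calc s * ‖Y‖ = s ^ (1 - 1/p) * (s ^ (1/p) * ‖Y‖) := by rw [← mul_assoc, ← h4']
      _ ≤ s ^ (1 - 1/p) * K1 := by
          apply mul_le_mul_of_nonneg_left h3' (Real.rpow_nonneg hs0 _)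
      _ = K1 * s ^ (1 - 1/p) := mul_comm _ _
    have hXb : s * ‖X‖ ≤ K2 * s := by
      have h1 : ‖X‖ ^ p ≤ 2 * M / C := by
        rw [le_div_iff₀ hC]
        nlinarith [Real.rpow_nonneg (norm_nonneg X) p]
      have h2' : ‖X‖ ≤ K2 := by
        have := le_rpow_inv_of_rpow_le hp0 (norm_nonneg X) h1
        rwa [← hK2] at this
      calc s * ‖X‖ ≤ s * K2 := mul_le_mul_of_nonneg_left h2' hs0
      _ = K2 * s := mul_comm _ _
    linarith
  apply squeeze_zero' (Eventually.of_forall fun k => norm_nonneg _) hbound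
  have t1 : Tendsto (fun k => K1 * ts k ^ (1 - 1/p)) atTop (𝓝 0) := by
    have hc : Tendsto (fun k => ts k ^ (1 - 1/p)) atTop (𝓝 0) := by
      have := (Real.continuousAt_rpow_const 0 (1 - 1/p) (Or.inr hq.le)).tendsto.comp hts0
      have h00 : (0:ℝ) ^ (1 - p⁻¹) = 0 := Real.zero_rpow (by rw [← one_div]; exact hq.ne')
      simpa [Function.comp_def, h00, one_div] using this
    simpa using hc.const_mul K1
  have t2 : Tendsto (fun k => K2 * ts k) atTop (𝓝 0) := by
    simpa using hts0.const_mul K2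
  simpa using t1.add t2

lemma aux_t0 {p C : ℝ} (hp : 1 < p) (hC : 0 < C) {g : M32 → ℝ≥0∞} (hg : LowerSemicontinuous g)
    {ξ : M32} {ξs ηs : ℕ → M32} {ts : ℕ → ℝ} (hξs : Tendsto ξs atTop (𝓝 ξ))
    (hts : ∀ k, ts k ∈ Icc (0:ℝ) 1) (hts0 : Tendsto ts atTop (𝓝 0))
    {vs : ℕ → ℝ≥0∞} {L : ℝ≥0∞} (hL : L ≠ ⊤) (hvL : Tendsto vs atTop (𝓝 L))
    (h1 : ∀ᶠ k in atTop, ENNReal.ofReal (1 - ts k) * g (ξs k - ts k • ηs k) ≤ vs k)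
    (h2 : ∀ᶠ k in atTop, ENNReal.ofReal (ts k * (C * ‖ξs k + (1 - ts k) • ηs k‖ ^ p)) ≤ vs k)
    (h3 : ∀ᶠ k in atTop, ENNReal.ofReal ((1 - ts k) * (C * ‖ξs k - ts k • ηs k‖ ^ p)) ≤ vs k) :
    g ξ ≤ L := by
  have hL1 : L + 1 ≠ ⊤ := ENNReal.add_ne_top.2 ⟨hL, ENNReal.one_ne_top⟩
  have hev : ∀ᶠ k in atTop, vs k ≤ L + 1 :=
    hvL.eventually_le_const (ENNReal.lt_add_right hL one_ne_zero)
  set M := (L + 1).toReal with hM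
  have h2' : ∀ᶠ k in atTop, ts k * (C * ‖ξs k + (1 - ts k) • ηs k‖ ^ p) ≤ M := by
    filter_upwards [h2, hev] with k hk2 hke
    exact (ENNReal.ofReal_le_iff_le_toReal hL1).1 (hk2.trans hke)
  have h3' : ∀ᶠ k in atTop, (1 - ts k) * (C * ‖ξs k - ts k • ηs k‖ ^ p) ≤ M := by
    filter_upwards [h3, hev] with k hk3 hke
    exact (ENNReal.ofReal_le_iff_le_toReal hL1).1 (hk3.trans hke)
  have hu : Tendsto (fun k => ts k • ηs k) atTop (𝓝 0) :=
    tendsto_smul_eta_zero hp hC hts hts0 h2' h3'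
  have hZ : Tendsto (fun k => ξs k - ts k • ηs k) atTop (𝓝 ξ) := by
    simpa using hξs.sub hu
  have hcs : Tendsto (fun k => 1 - ts k) atTop (𝓝 1) := by
    simpa using tendsto_const_nhds.sub hts0
  exact lsc_le_lim_of_mul hg hZ hcs hvL h1

lemma key {p C : ℝ} (hp : 1 < p) (hC : 0 < C) {g : M32 → ℝ≥0∞} (hg : LowerSemicontinuous g)
    (hgc : ∀ η, ENNReal.ofReal (C * ‖η‖ ^ p) ≤ g η)
    {ξ : M32} {ξs : ℕ → M32} (hξs : Tendsto ξs atTop (𝓝 ξ))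
    {as : ℕ → Fin 2 → ℝ} {bs : ℕ → Fin 3 → ℝ} {ts : ℕ → ℝ} (hts : ∀ n, ts n ∈ Icc (0:ℝ) 1)
    {L : ℝ≥0∞} (hL : L ≠ ⊤)
    (hv : Tendsto (fun n => Gval g (ξs n) (Matrix.vecMulVec (bs n) (as n)) (ts n)) atTop (𝓝 L)) :
    ∃ a b t, t ∈ Icc (0:ℝ) 1 ∧ Gval g ξ (Matrix.vecMulVec b a) t ≤ L := by
  set η : ℕ → M32 := fun n => Matrix.vecMulVec (bs n) (as n) with hη
  set v : ℕ → ℝ≥0∞ := fun n => Gval g (ξs n) (η n) (ts n) with hvdef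
  set X : ℕ → M32 := fun n => ξs n - ts n • η n with hX
  set Y : ℕ → M32 := fun n => ξs n + (1 - ts n) • η n with hY
  have ht0 : ∀ n, (0:ℝ) ≤ ts n := fun n => (hts n).1
  have ht1 : ∀ n, ts n ≤ 1 := fun n => (hts n).2
  have hb1 : ∀ n, ENNReal.ofReal ((1 - ts n) * (C * ‖X n‖ ^ p)) ≤ v n := by
    intro n
    rw [ENNReal.ofReal_mul (by linarith [ht1 n])]
    exact le_trans (mul_le_mul_right (hgc (X n)) _) (le_add_right le_rfl)
  have hb2 : ∀ n, ENNReal.ofReal (ts n * (C * ‖Y n‖ ^ p)) ≤ v n := by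
    intro n
    rw [ENNReal.ofReal_mul (ht0 n)]
    exact le_trans (mul_le_mul_right (hgc (Y n)) _) (le_add_left le_rfl)
  have hb3 : ∀ n, ENNReal.ofReal (1 - ts n) * g (X n) ≤ v n := fun n => le_add_right le_rfl
  have hb4 : ∀ n, ENNReal.ofReal (ts n) * g (Y n) ≤ v n := fun n => le_add_left le_rfl
  obtain ⟨t₀, ht₀, φ, hφ, htφ⟩ := isCompact_Icc.tendsto_subseq hts
  have hφat : Tendsto φ atTop atTop := hφ.tendsto_atTop
  have hvφ : Tendsto (fun k => v (φ k)) atTop (𝓝 L) := hv.comp hφat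
  have hξφ : Tendsto (fun k => ξs (φ k)) atTop (𝓝 ξ) := hξs.comp hφat
  rcases eq_or_lt_of_le ht₀.1 with h0 | h0
  · -- t₀ = 0
    refine ⟨0, 0, 0, ⟨le_rfl, zero_le_one⟩, ?_⟩
    have hgξ : g ξ ≤ L := by
      refine aux_t0 hp hC hg (ξs := fun k => ξs (φ k)) (ηs := fun k => η (φ k))
        (ts := fun k => ts (φ k)) hξφ (fun k => hts (φ k)) (h0 ▸ htφ) hL hvφ
        (Eventually.of_forall fun k => hb3 (φ k))
        (Eventually.of_forall fun k => hb2 (φ k))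
        (Eventually.of_forall fun k => hb1 (φ k))
    calc Gval g ξ (Matrix.vecMulVec 0 0) 0 = g ξ := by
          simp [Gval]
    _ ≤ L := hgξ
  rcases eq_or_lt_of_le ht₀.2 with h1 | h1
  · -- t₀ = 1
    refine ⟨0, 0, 1, ⟨zero_le_one, le_rfl⟩, ?_⟩
    have hgξ : g ξ ≤ L := by
      have hts1 : Tendsto (fun k => 1 - ts (φ k)) atTop (𝓝 0) := by
        have := tendsto_const_nhds (x := (1:ℝ)) (f := atTop (α := ℕ))
        simpa [h1] using this.sub htφ
      refine aux_t0 hp hC hg (ξs := fun k => ξs (φ k)) (ηs := fun k => -(η (φ k)))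
        (ts := fun k => 1 - ts (φ k)) hξφ
        (fun k => ⟨show (0:ℝ) ≤ 1 - ts (φ k) by linarith [ht1 (φ k)],
          show (1:ℝ) - ts (φ k) ≤ 1 by linarith [ht0 (φ k)]⟩) hts1 hL hvφ ?_ ?_ ?_
      · refine Eventually.of_forall fun k => ?_
        have := hb4 (φ k)
        simpa [hY, sub_sub_cancel, smul_neg, sub_neg_eq_add] using this
      · refine Eventually.of_forall fun k => ?_
        have := hb1 (φ k)
        simpa [hX, sub_sub_cancel, smul_neg, sub_neg_eq_add, ← sub_eq_add_neg] using this
      · refine Eventually.of_forall fun k => ?_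
        have := hb2 (φ k)
        simpa [hY, sub_sub_cancel, smul_neg, sub_neg_eq_add] using this
    calc Gval g ξ (Matrix.vecMulVec 0 0) 1 = g ξ := by
          simp [Gval]
    _ ≤ L := hgξ
  · -- 0 < t₀ < 1
    have hL1 : L + 1 ≠ ⊤ := ENNReal.add_ne_top.2 ⟨hL, ENNReal.one_ne_top⟩
    set M := (L + 1).toReal with hM
    have hev : ∀ᶠ k in atTop, v (φ k) ≤ L + 1 :=
      hvφ.eventually_le_const (ENNReal.lt_add_right hL one_ne_zero)
    have hIcc : ∀ᶠ k in atTop, ts (φ k) ∈ Icc (t₀/2) ((1+t₀)/2) :=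
      htφ.eventually (Icc_mem_nhds (by linarith) (by linarith))
    set KX := (M / ((1 - t₀)/2 * C)) ^ (1/p) with hKX
    set KY := (M / (t₀/2 * C)) ^ (1/p) with hKY
    have hYX : ∀ n, η n = Y n - X n := by
      intro n; rw [hX, hY]; simp only; module
    have hK : ∀ᶠ k in atTop, ‖η (φ k)‖ ≤ KX + KY := by
      filter_upwards [hev, hIcc] with k hke hki
      have e1 : (1 - ts (φ k)) * (C * ‖X (φ k)‖ ^ p) ≤ M :=
        (ENNReal.ofReal_le_iff_le_toReal hL1).1 ((hb1 (φ k)).trans hke)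
      have e2 : ts (φ k) * (C * ‖Y (φ k)‖ ^ p) ≤ M :=
        (ENNReal.ofReal_le_iff_le_toReal hL1).1 ((hb2 (φ k)).trans hke)
      have hXn : (0:ℝ) ≤ ‖X (φ k)‖ ^ p := Real.rpow_nonneg (norm_nonneg _) p
      have hYn : (0:ℝ) ≤ ‖Y (φ k)‖ ^ p := Real.rpow_nonneg (norm_nonneg _) p
      have hX' : ‖X (φ k)‖ ≤ KX := by
        apply le_rpow_inv_of_rpow_le (by linarith) (norm_nonneg _)
        rw [le_div_iff₀ (by nlinarith)]
        calc ‖X (φ k)‖ ^ p * ((1 - t₀) / 2 * C)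
            = (1 - t₀)/2 * (C * ‖X (φ k)‖ ^ p) := by ring
        _ ≤ (1 - ts (φ k)) * (C * ‖X (φ k)‖ ^ p) :=
            mul_le_mul_of_nonneg_right (by linarith [hki.2]) (by positivity)
        _ ≤ M := e1
      have hY' : ‖Y (φ k)‖ ≤ KY := by
        apply le_rpow_inv_of_rpow_le (by linarith) (norm_nonneg _)
        rw [le_div_iff₀ (by nlinarith)]
        calc ‖Y (φ k)‖ ^ p * (t₀ / 2 * C)
            = t₀/2 * (C * ‖Y (φ k)‖ ^ p) := by ring
        _ ≤ ts (φ k) * (C * ‖Y (φ k)‖ ^ p) :=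
            mul_le_mul_of_nonneg_right (by linarith [hki.1]) (by positivity)
        _ ≤ M := e2
      calc ‖η (φ k)‖ = ‖Y (φ k) - X (φ k)‖ := by rw [hYX]
      _ ≤ ‖Y (φ k)‖ + ‖X (φ k)‖ := norm_sub_le _ _
      _ ≤ KY + KX := add_le_add hY' hX'
      _ = KX + KY := add_comm _ _
    set A : ℕ → Fin 2 → ℝ := fun n => if as n = 0 then 0 else ‖as n‖⁻¹ • as n with hA
    set B : ℕ → Fin 3 → ℝ := fun n => ‖as n‖ • bs n with hB
    have hAB : ∀ n, Matrix.vecMulVec (B n) (A n) = η n := by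
      intro n
      by_cases h : as n = 0
      · ext i j
        simp [hA, hB, h, Matrix.vecMulVec_apply, hη]
      · ext i j
        simp only [hA, hB, if_neg h, Matrix.vecMulVec_apply, Pi.smul_apply, smul_eq_mul, hη]
        have hne : ‖as n‖ ≠ 0 := norm_ne_zero_iff.2 h
        field_simp
    have hAle : ∀ n, ‖A n‖ ≤ 1 := by
      intro n; by_cases h : as n = 0
      · simp [hA, h]
      · simp only [hA, if_neg h]
        rw [norm_smul, norm_inv, norm_norm, inv_mul_cancel₀ (norm_ne_zero_iff.2 h)]
    have hBle : ∀ᶠ k in atTop, ‖B (φ k)‖ ≤ max (KX + KY) 0 := by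
      filter_upwards [hK] with k hk
      by_cases h : as (φ k) = 0
      · simp only [hB, h, norm_zero, zero_smul]
        exact le_max_of_le_right le_rfl
      · have hA1 : ‖A (φ k)‖ = 1 := by
          simp only [hA, if_neg h]
          rw [norm_smul, norm_inv, norm_norm, inv_mul_cancel₀ (norm_ne_zero_iff.2 h)]
        have hBe : ‖B (φ k)‖ = ‖η (φ k)‖ := by
          rw [← hAB (φ k), norm_vecMulVec, hA1, mul_one]
        rw [hBe]; exact le_max_of_le_left hk
    obtain ⟨N, hN⟩ := eventually_atTop.1 hBle
    have hmem : ∀ k, (A (φ (k + N)), B (φ (k + N))) ∈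
        (Metric.closedBall (0 : Fin 2 → ℝ) 1) ×ˢ
          (Metric.closedBall (0 : Fin 3 → ℝ) (max (KX + KY) 0)) := by
      intro k
      refine Set.mem_prod.2 ⟨?_, ?_⟩
      · rw [mem_closedBall_zero_iff]; exact hAle _
      · rw [mem_closedBall_zero_iff]; exact hN (k + N) (Nat.le_add_left N k)
    have hcomp : IsCompact ((Metric.closedBall (0 : Fin 2 → ℝ) 1) ×ˢ
        (Metric.closedBall (0 : Fin 3 → ℝ) (max (KX + KY) 0))) :=
      (isCompact_closedBall _ _).prod (isCompact_closedBall _ _)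
    obtain ⟨⟨a, b⟩, -, φ₂, hφ₂, hab⟩ := hcomp.tendsto_subseq hmem
    set σ : ℕ → ℕ := fun k => φ (φ₂ k + N) with hσ
    have hσat : Tendsto σ atTop atTop :=
      hφat.comp ((tendsto_add_atTop_nat N).comp hφ₂.tendsto_atTop)
    have hAσ : Tendsto (fun k => A (σ k)) atTop (𝓝 a) :=
      (continuous_fst.tendsto _).comp hab
    have hBσ : Tendsto (fun k => B (σ k)) atTop (𝓝 b) :=
      (continuous_snd.tendsto _).comp hab
    have hησ : Tendsto (fun k => η (σ k)) atTop (𝓝 (Matrix.vecMulVec b a)) := by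
      have h := (continuous_vecMulVec.tendsto (b, a)).comp (hBσ.prodMk_nhds hAσ)
      exact Tendsto.congr (fun k => hAB (σ k)) h
    have htσ : Tendsto (fun k => ts (σ k)) atTop (𝓝 t₀) :=
      htφ.comp ((tendsto_add_atTop_nat N).comp hφ₂.tendsto_atTop)
    have hξσ : Tendsto (fun k => ξs (σ k)) atTop (𝓝 ξ) := hξs.comp hσat
    have hXσ : Tendsto (fun k => X (σ k)) atTop (𝓝 (ξ - t₀ • Matrix.vecMulVec b a)) :=
      hξσ.sub (htσ.smul hησ)
    have hYσ : Tendsto (fun k => Y (σ k)) atTop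
        (𝓝 (ξ + (1 - t₀) • Matrix.vecMulVec b a)) :=
      hξσ.add ((tendsto_const_nhds.sub htσ).smul hησ)
    have hvσ : Tendsto (fun k => v (σ k)) atTop (𝓝 L) := hv.comp hσat
    obtain ⟨α, -, φ₃, hφ₃, hgX⟩ := isCompact_univ.tendsto_subseq
      (x := fun k => g (X (σ k))) (fun k => Set.mem_univ _)
    obtain ⟨β, -, φ₄, hφ₄, hgY⟩ := isCompact_univ.tendsto_subseq
      (x := fun k => g (Y (σ (φ₃ k)))) (fun k => Set.mem_univ _)
    set τ : ℕ → ℕ := fun k => σ (φ₃ (φ₄ k)) with hτ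
    have hφ₃₄ : Tendsto (fun k => φ₃ (φ₄ k)) atTop atTop :=
      hφ₃.tendsto_atTop.comp hφ₄.tendsto_atTop
    have hgXτ : Tendsto (fun k => g (X (τ k))) atTop (𝓝 α) := hgX.comp hφ₄.tendsto_atTop
    have hgYτ : Tendsto (fun k => g (Y (τ k))) atTop (𝓝 β) := hgY
    have hXτ : Tendsto (fun k => X (τ k)) atTop (𝓝 (ξ - t₀ • Matrix.vecMulVec b a)) :=
      hXσ.comp hφ₃₄
    have hYτ : Tendsto (fun k => Y (τ k)) atTop
        (𝓝 (ξ + (1 - t₀) • Matrix.vecMulVec b a)) := hYσ.comp hφ₃₄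
    have htτ : Tendsto (fun k => ts (τ k)) atTop (𝓝 t₀) := htσ.comp hφ₃₄
    have hvτ : Tendsto (fun k => v (τ k)) atTop (𝓝 L) := hvσ.comp hφ₃₄
    have hne1 : ENNReal.ofReal (1 - t₀) ≠ 0 := by
      rw [Ne, ENNReal.ofReal_eq_zero, not_le]; linarith
    have hne2 : ENNReal.ofReal t₀ ≠ 0 := by
      rw [Ne, ENNReal.ofReal_eq_zero, not_le]; linarith
    have hmul1 : Tendsto (fun k => ENNReal.ofReal (1 - ts (τ k)) * g (X (τ k))) atTop
        (𝓝 (ENNReal.ofReal (1 - t₀) * α)) := by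
      refine ENNReal.Tendsto.mul (ENNReal.tendsto_ofReal ?_) (Or.inl hne1) hgXτ
        (Or.inr ENNReal.ofReal_ne_top)
      simpa using tendsto_const_nhds.sub htτ
    have hmul2 : Tendsto (fun k => ENNReal.ofReal (ts (τ k)) * g (Y (τ k))) atTop
        (𝓝 (ENNReal.ofReal t₀ * β)) :=
      ENNReal.Tendsto.mul (ENNReal.tendsto_ofReal htτ) (Or.inl hne2) hgYτ
        (Or.inr ENNReal.ofReal_ne_top)
    have hsum : Tendsto (fun k => v (τ k)) atTop
        (𝓝 (ENNReal.ofReal (1 - t₀) * α + ENNReal.ofReal t₀ * β)) := hmul1.add hmul2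
    have hLeq : L = ENNReal.ofReal (1 - t₀) * α + ENNReal.ofReal t₀ * β :=
      tendsto_nhds_unique hvτ hsum
    have hgXle : g (ξ - t₀ • Matrix.vecMulVec b a) ≤ α := lsc_le_of_tendsto hg hXτ hgXτ
    have hgYle : g (ξ + (1 - t₀) • Matrix.vecMulVec b a) ≤ β := lsc_le_of_tendsto hg hYτ hgYτ
    refine ⟨a, b, t₀, ht₀, ?_⟩
    rw [hLeq]
    exact add_le_add (mul_le_mul_right hgXle _) (mul_le_mul_right hgYle _)


lemma Rseq_succ (f : Matrix (Fin 3) (Fin 2) ℝ → ℝ≥0∞) (i : ℕ) (ξ : M32) :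
    Rseq f (i + 1) ξ = ⨅ (a : Fin 2 → ℝ) (b : Fin 3 → ℝ) (t : ℝ) (_ : t ∈ Icc (0 : ℝ) 1),
      Gval (Rseq f i) ξ (Matrix.vecMulVec b a) t := rfl

lemma W0_coercive {p C : ℝ} (hp : 0 < p) (hC : 0 < C)
    {W : Matrix (Fin 3) (Fin 3) ℝ → ℝ≥0∞}
    (hWcoer : ∀ F, ENNReal.ofReal (C * ‖F‖ ^ p) ≤ W F) (ξ : M32) :
    ENNReal.ofReal (C * ‖ξ‖ ^ p) ≤ W0 W ξ := by
  refine le_iInf fun ζ => le_trans ?_ (hWcoer _)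
  apply ENNReal.ofReal_le_ofReal
  have h := Real.rpow_le_rpow (norm_nonneg ξ) (norm_fst_le_juxt ξ ζ) hp.le
  nlinarith

lemma W0_lsc {p C : ℝ} (hp : 0 < p) (hC : 0 < C)
    {W : Matrix (Fin 3) (Fin 3) ℝ → ℝ≥0∞} (hWcont : Continuous W)
    (hWcoer : ∀ F, ENNReal.ofReal (C * ‖F‖ ^ p) ≤ W F) :
    LowerSemicontinuous (W0 W) := by
  intro ξ y hy
  by_contra hcon
  obtain ⟨y', hy1', hy2'⟩ := exists_between hy
  have hy't : y' ≠ ⊤ := hy2'.ne_top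
  have hfreq : ∃ᶠ z in 𝓝 ξ, W0 W z ≤ y := by
    simpa [not_lt] using Filter.not_eventually.1 hcon
  obtain ⟨ξs, hξs, hWs⟩ := exists_seq_of_frequently_nhds hfreq
  have hex : ∀ n, ∃ ζ, W (juxt (ξs n) ζ) < y' := by
    intro n
    exact iInf_lt_iff.1 (lt_of_le_of_lt (hWs n) hy1')
  choose ζs hζs using hex
  have hbound : ∀ n, ‖ζs n‖ ≤ (y'.toReal / C) ^ (1/p) := by
    intro n
    apply le_rpow_inv_of_rpow_le hp (norm_nonneg _)
    have h1 : ENNReal.ofReal (C * ‖juxt (ξs n) (ζs n)‖ ^ p) ≤ y' :=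
      le_trans (hWcoer _) (hζs n).le
    have h2 : C * ‖juxt (ξs n) (ζs n)‖ ^ p ≤ y'.toReal :=
      (ENNReal.ofReal_le_iff_le_toReal hy't).1 h1
    rw [le_div_iff₀ hC]
    have h3 := Real.rpow_le_rpow (norm_nonneg _) (norm_snd_le_juxt (ξs n) (ζs n)) hp.le
    nlinarith
  obtain ⟨ζ₀, -, ψ, hψ, hζψ⟩ :=
    (isCompact_closedBall (0 : Fin 3 → ℝ) ((y'.toReal / C) ^ (1/p))).tendsto_subseq
      (fun n => mem_closedBall_zero_iff.2 (hbound n))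
  have hjux : Tendsto (fun k => juxt (ξs (ψ k)) (ζs (ψ k))) atTop (𝓝 (juxt ξ ζ₀)) :=
    (continuous_juxt.tendsto _).comp ((hξs.comp hψ.tendsto_atTop).prodMk_nhds hζψ)
  have hWlim : Tendsto (fun k => W (juxt (ξs (ψ k)) (ζs (ψ k)))) atTop (𝓝 (W (juxt ξ ζ₀))) :=
    (hWcont.tendsto _).comp hjux
  have hle2 : W (juxt ξ ζ₀) ≤ y' :=
    le_of_tendsto hWlim (Eventually.of_forall fun k => (hζs (ψ k)).le)
  exact absurd (le_trans (iInf_le _ ζ₀) hle2) (not_le.2 hy2')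

lemma attain {p C : ℝ} (hp : 1 < p) (hC : 0 < C) {g : M32 → ℝ≥0∞}
    (hg : LowerSemicontinuous g) (hgc : ∀ η, ENNReal.ofReal (C * ‖η‖ ^ p) ≤ g η) (ξ : M32) :
    ∃ a b t, t ∈ Icc (0:ℝ) 1 ∧
      (⨅ (a' : Fin 2 → ℝ) (b' : Fin 3 → ℝ) (t' : ℝ) (_ : t' ∈ Icc (0 : ℝ) 1),
        Gval g ξ (Matrix.vecMulVec b' a') t') = Gval g ξ (Matrix.vecMulVec b a) t := by
  set I := ⨅ (a' : Fin 2 → ℝ) (b' : Fin 3 → ℝ) (t' : ℝ) (_ : t' ∈ Icc (0 : ℝ) 1),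
    Gval g ξ (Matrix.vecMulVec b' a') t' with hI
  have hle : ∀ a b (t : ℝ), t ∈ Icc (0:ℝ) 1 → I ≤ Gval g ξ (Matrix.vecMulVec b a) t :=
    fun a b t ht => iInf_le_of_le a (iInf_le_of_le b (iInf_le_of_le t (iInf_le _ ht)))
  by_cases hItop : I = ⊤
  · refine ⟨0, 0, 0, ⟨le_rfl, zero_le_one⟩, ?_⟩
    have h := hle 0 0 0 ⟨le_rfl, zero_le_one⟩
    rw [hItop] at h ⊢
    exact (top_le_iff.1 h).symm
  · have hlt : ∀ n : ℕ, ∃ (a : Fin 2 → ℝ) (b : Fin 3 → ℝ) (t : ℝ), t ∈ Icc (0:ℝ) 1 ∧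
        Gval g ξ (Matrix.vecMulVec b a) t < I + ((n : ℝ≥0∞) + 1)⁻¹ := by
      intro n
      have hne : ((n : ℝ≥0∞) + 1)⁻¹ ≠ 0 := by
        rw [Ne, ENNReal.inv_eq_zero]
        exact ENNReal.add_ne_top.2 ⟨ENNReal.natCast_ne_top n, ENNReal.one_ne_top⟩
      have hI' : I < I + ((n : ℝ≥0∞) + 1)⁻¹ := ENNReal.lt_add_right hItop hne
      rw [hI] at hI'
      simp only [iInf_lt_iff] at hI'
      obtain ⟨a, b, t, ht, hv⟩ := hI'
      exact ⟨a, b, t, ht, by rwa [← hI] at hv⟩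
    choose as bs ts hts hval using hlt
    have h0 : Tendsto (fun n : ℕ => ((n : ℝ≥0∞) + 1)⁻¹) atTop (𝓝 0) := by
      refine tendsto_of_tendsto_of_tendsto_of_le_of_le (g := fun _ : ℕ => (0:ℝ≥0∞))
        (h := fun n : ℕ => ((n : ℝ≥0∞))⁻¹) tendsto_const_nhds
        ENNReal.tendsto_inv_nat_nhds_zero (fun n => zero_le) (fun n => ?_)
      exact ENNReal.inv_le_inv.2 (le_add_right le_rfl)
    have htend : Tendsto (fun n : ℕ => I + ((n : ℝ≥0∞) + 1)⁻¹) atTop (𝓝 I) := by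
      simpa using tendsto_const_nhds.add h0
    have hvtend : Tendsto (fun n => Gval g ξ (Matrix.vecMulVec (bs n) (as n)) (ts n))
        atTop (𝓝 I) :=
      tendsto_of_tendsto_of_tendsto_of_le_of_le tendsto_const_nhds htend
        (fun n => hle _ _ _ (hts n)) (fun n => (hval n).le)
    obtain ⟨a, b, t, ht, hkey⟩ := key hp hC hg hgc (tendsto_const_nhds (x := ξ)) hts hItop hvtend
    exact ⟨a, b, t, ht, le_antisymm (hle a b t ht) hkey⟩

lemma lsc_Rstep {p C : ℝ} (hp : 1 < p) (hC : 0 < C) {g : M32 → ℝ≥0∞}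
    (hg : LowerSemicontinuous g) (hgc : ∀ η, ENNReal.ofReal (C * ‖η‖ ^ p) ≤ g η) :
    LowerSemicontinuous (fun ξ => ⨅ (a : Fin 2 → ℝ) (b : Fin 3 → ℝ) (t : ℝ)
      (_ : t ∈ Icc (0 : ℝ) 1), Gval g ξ (Matrix.vecMulVec b a) t) := by
  set R := fun ξ => ⨅ (a : Fin 2 → ℝ) (b : Fin 3 → ℝ) (t : ℝ)
      (_ : t ∈ Icc (0 : ℝ) 1), Gval g ξ (Matrix.vecMulVec b a) t with hR
  intro ξ y hy
  by_contra hcon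
  obtain ⟨y', hy1', hy2'⟩ := exists_between hy
  have hy't : y' ≠ ⊤ := hy2'.ne_top
  have hfreq : ∃ᶠ z in 𝓝 ξ, R z ≤ y := by
    simpa [not_lt] using Filter.not_eventually.1 hcon
  obtain ⟨ξs, hξs, hRs⟩ := exists_seq_of_frequently_nhds hfreq
  have hex : ∀ n, ∃ (a : Fin 2 → ℝ) (b : Fin 3 → ℝ) (t : ℝ), t ∈ Icc (0:ℝ) 1 ∧
      Gval g (ξs n) (Matrix.vecMulVec b a) t < y' := by
    intro n
    have : R (ξs n) < y' := lt_of_le_of_lt (hRs n) hy1'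
    rw [hR] at this
    simp only [iInf_lt_iff] at this
    obtain ⟨a, b, t, ht, hv⟩ := this
    exact ⟨a, b, t, ht, hv⟩
  choose as bs ts hts hval using hex
  obtain ⟨L, -, ψ, hψ, hL⟩ := isCompact_univ.tendsto_subseq
    (x := fun n => Gval g (ξs n) (Matrix.vecMulVec (bs n) (as n)) (ts n))
    (fun n => Set.mem_univ _)
  have hLy : L ≤ y' := le_of_tendsto hL (Eventually.of_forall fun k => (hval (ψ k)).le)
  have hLtop : L ≠ ⊤ := (lt_of_le_of_lt hLy (lt_top_iff_ne_top.2 hy't)).ne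
  obtain ⟨a, b, t, ht, hGle⟩ := key hp hC hg hgc (hξs.comp hψ.tendsto_atTop)
    (fun k => hts (ψ k)) hLtop hL
  have hfin : R ξ ≤ y' := by
    refine le_trans ?_ (hGle.trans hLy)
    exact iInf_le_of_le a (iInf_le_of_le b (iInf_le_of_le t (iInf_le _ ht)))
  exact absurd hfin (not_le.2 hy2')

/-- Lemma B.3 (Ben Belgacem): for every `i ≥ 0` and every `ξ ∈ M^{3×2}` of rank 2, the
infimum defining `R_{i+1}W₀(ξ)` is attained. -/
theorem Rseq_inf_attained
    (p C : ℝ) (hp : 1 < p) (hC : 0 < C)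
    (W : Matrix (Fin 3) (Fin 3) ℝ → ℝ≥0∞)
    (hWcont : Continuous W)
    (hWcoer : ∀ F : Matrix (Fin 3) (Fin 3) ℝ, ENNReal.ofReal (C * ‖F‖ ^ p) ≤ W F)
    (hNim : ∀ F : Matrix (Fin 3) (Fin 3) ℝ, W F = ⊤ ↔ F.det ≤ 0)
    (hIcv : ∀ δ : ℝ, 0 < δ → ∃ c : ℝ, 0 < c ∧ ∀ F : Matrix (Fin 3) (Fin 3) ℝ,
      δ ≤ F.det → W F ≤ ENNReal.ofReal (c * (1 + ‖F‖ ^ p)))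
    (i : ℕ) (ξ : Matrix (Fin 3) (Fin 2) ℝ) (hξ : ξ.rank = 2) :
    ∃ (a : Fin 2 → ℝ) (b : Fin 3 → ℝ) (t : ℝ), t ∈ Set.Icc (0 : ℝ) 1 ∧
      Rseq (W0 W) (i + 1) ξ =
        ENNReal.ofReal (1 - t) * Rseq (W0 W) i (ξ - t • Matrix.vecMulVec b a) +
          ENNReal.ofReal t * Rseq (W0 W) i (ξ + (1 - t) • Matrix.vecMulVec b a) := by
  have hp0 : (0:ℝ) < p := by linarith
  have hmain : ∀ j, (∀ ξ', ENNReal.ofReal (C * ‖ξ'‖ ^ p) ≤ Rseq (W0 W) j ξ') ∧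
      LowerSemicontinuous (Rseq (W0 W) j) := by
    intro j
    induction j with
    | zero =>
        exact ⟨W0_coercive hp0 hC hWcoer, W0_lsc hp0 hC hWcont hWcoer⟩
    | succ j ih =>
        constructor
        · intro ξ'
          rw [Rseq_succ]
          exact le_iInf fun a => le_iInf fun b => le_iInf fun t => le_iInf fun ht =>
            Gval_coercive hp.le hC ih.1 _ _ ht
        · have h := lsc_Rstep hp hC ih.2 ih.1
          intro x y hy
          have := h x y (by rw [Rseq_succ] at hy; exact hy)
          filter_upwards [this] with z hz
          rw [Rseq_succ]
          exact hz
  obtain ⟨a, b, t, ht, heq⟩ := attain hp hC (hmain i).2 (hmain i).1 ξ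
  refine ⟨a, b, t, ht, ?_⟩
  rw [Rseq_succ]
  exact heq
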